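/- Let G be a k-connected graph on n vertices with k ≥ n/3. Then every two longest paths in G intersect in at least k vertices. -/

import Mathlib

/-- A graph is `k`-connected if it has more than `k` vertices and deleting any set of
fewer than `k` vertices leaves a connected graph. -/
def KConnected {V : Type*} [Fintype V] (G : SimpleGraph V) (k : ℕ) : Prop :=
  k < Fintype.card V ∧
    ∀ S : Set V, S.ncard < k → (G.induce Sᶜ).Connected

section Aux
open SimpleGraph Walk

variable {V : Type*} {G : SimpleGraph V}

lemma getVert_mem_support' {u v : V} (p : G.Walk u v) {i : ℕ} (hi : i ≤ p.length) :
    p.getVert i ∈ p.support := Walk.mem_support_iff_exists_getVert.mpr ⟨i, rfl, hi⟩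

lemma IsPath.getVert_inj' {u v : V} {p : G.Walk u v} (hp : p.IsPath) :
    ∀ {i j : ℕ}, i ≤ p.length → j ≤ p.length → p.getVert i = p.getVert j → i = j := by
  induction p with
  | nil => intro i j hi hj _; simp at hi hj; omega
  | @cons a b c h q ih =>
    rw [Walk.cons_isPath_iff] at hp
    intro i j hi hj hij
    match i, j with
    | 0, 0 => rfl
    | 0, (j+1) =>
      exfalso
      rw [Walk.getVert_zero, Walk.getVert_cons_succ] at hij
      exact hp.2 (hij ▸ getVert_mem_support' q (by simpa using hj))
    | (i+1), 0 =>
      exfalso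
      rw [Walk.getVert_zero, Walk.getVert_cons_succ] at hij
      exact hp.2 (hij ▸ getVert_mem_support' q (by simpa using hi))
    | (i+1), (j+1) =>
      rw [Walk.getVert_cons_succ, Walk.getVert_cons_succ] at hij
      have := ih hp.1 (by simpa using hi) (by simpa using hj) hij
      omega


lemma kconn_mindeg {V : Type*} [Fintype V] {G : SimpleGraph V} {k : ℕ}
    (hconn : KConnected G k) (v : V) : k ≤ (G.neighborSet v).ncard := by
  by_contra h
  push_neg at h
  have hc := hconn.2 _ h
  have h1 := hconn.1
  have hv : v ∈ (G.neighborSet v)ᶜ := by simp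
  have h2 : 1 < ((G.neighborSet v)ᶜ).ncard := by
    have h3 := Set.ncard_add_ncard_compl (G.neighborSet v)
    have hcard : Nat.card V = Fintype.card V := Nat.card_eq_fintype_card
    omega
  obtain ⟨u, hu, hne⟩ := Set.exists_ne_of_one_lt_ncard h2 v
  obtain ⟨w⟩ := hc.preconnected ⟨v, hv⟩ ⟨u, hu⟩
  have hnn : ¬ w.Nil := Walk.not_nil_of_ne (by simp [Subtype.ext_iff]; exact fun h => hne h.symm)
  have hadj := w.adj_snd hnn
  simp only [comap_adj, Function.Embedding.coe_subtype] at hadj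
  exact (w.getVert 1).2 hadj

end Aux

section Main
open SimpleGraph Walk

theorem stmt_6 {V : Type*} [Fintype V] {G : SimpleGraph V} (k n : ℕ)
    (hn : Fintype.card V = n)
    (hconn : KConnected G k)
    (hk : (n : ℝ) / 3 ≤ (k : ℝ))
    {p₁ p₂ q₁ q₂ : V} (P : G.Walk p₁ p₂) (Q : G.Walk q₁ q₂)
    (hP : P.IsPath) (hQ : Q.IsPath)
    (hPmax : ∀ (u v : V) (W : G.Walk u v), W.IsPath → W.length ≤ P.length)
    (hQmax : ∀ (u v : V) (W : G.Walk u v), W.IsPath → W.length ≤ Q.length) :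
    k ≤ ({x | x ∈ P.support} ∩ {x | x ∈ Q.support}).ncard := by
  classical
  rcases Nat.eq_zero_or_pos k with hk0 | hk1
  · simp [hk0]
  have hn3 : n ≤ 3 * k := by
    have h3 : (n : ℝ) ≤ 3 * k := by linarith
    exact_mod_cast h3
  -- neighbors of the endpoints lie on P
  have hnbr1 : ∀ w, G.Adj p₁ w → w ∈ P.support := by
    intro w hw
    by_contra hws
    have hpath : (Walk.cons hw.symm P).IsPath := by
      rw [Walk.cons_isPath_iff]; exact ⟨hP, hws⟩
    have := hPmax _ _ _ hpath
    simp [Walk.length_cons] at this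
  have hnbr2 : ∀ w, G.Adj p₂ w → w ∈ P.support := by
    intro w hw
    by_contra hws
    have hpath : (Walk.cons hw.symm P.reverse).IsPath := by
      rw [Walk.cons_isPath_iff]
      exact ⟨hP.reverse, by simpa [Walk.support_reverse] using hws⟩
    have := hPmax _ _ _ hpath
    simp [Walk.length_cons, Walk.length_reverse] at this
  have key : 2 * k ≤ P.length ∨ P.length + 1 = n := by
    by_cases hcross : ∃ i, i < P.length ∧ G.Adj p₂ (P.getVert i) ∧ G.Adj p₁ (P.getVert (i+1))
    · right
      obtain ⟨i, him, hBa, hAb⟩ := hcross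
      set a := P.getVert i with ha
      have haS : a ∈ P.support := getVert_mem_support' P him.le
      have hspec : (P.takeUntil a haS).append (P.dropUntil a haS) = P := P.take_spec haS
      set t := P.takeUntil a haS with ht
      set d := P.dropUntil a haS with hd
      have hlen : t.length + d.length = P.length := by
        conv_rhs => rw [← hspec]
        rw [Walk.length_append]
      have htl : t.length = i := by
        have h1 : P.getVert t.length = a := by
          conv_lhs => rw [← hspec]
          rw [Walk.getVert_append]
          simp
        exact IsPath.getVert_inj' hP (by omega) him.le (h1.trans ha)
      have hdnn : ¬ d.Nil := by
        rw [Walk.not_nil_iff_lt_length]; omega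
      have hadj1 := d.adj_snd hdnn
      set W := d.tail with hWdef
      have hdW : Walk.cons hadj1 W = d := d.cons_tail_eq hdnn
      have hbP : P.getVert (i+1) = d.getVert 1 := by
        conv_lhs => rw [← hspec]
        rw [Walk.getVert_append, htl]
        have h2 : ¬ (i + 1 < i) := by omega
        rw [if_neg h2]
        have h3 : i + 1 - i = 1 := by omega
        rw [h3]
      have hAb' : G.Adj p₁ (d.getVert 1) := by rw [← hbP]; exact hAb
      set c : G.Walk p₁ p₁ :=
        t.append (Walk.cons hBa.symm (W.reverse.append (Walk.cons hAb'.symm Walk.nil))) with hc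
      have hWl : W.length + 1 = d.length := Walk.length_tail_add_one hdnn
      have hclen : c.length = P.length + 1 := by
        rw [hc]
        simp only [Walk.length_append, Walk.length_cons, Walk.length_reverse, Walk.length_nil]
        omega
      have hdsup : d.support.tail = W.support := by
        conv_lhs => rw [← hdW]
        simp
      have hPsup : P.support = (p₁ :: t.support.tail) ++ W.support := by
        conv_lhs => rw [← hspec]
        rw [Walk.support_append, hdsup]
        congr 1
        exact t.support_eq_cons
      have hcsup : c.support = (p₁ :: t.support.tail) ++ (W.support.reverse ++ [p₁]) := by
        rw [hc, Walk.support_append]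
        congr 1
        · exact t.support_eq_cons
        · simp [Walk.support_append, Walk.support_reverse]
      have hnodupP := hP.support_nodup
      rw [hPsup] at hnodupP
      have hctail : c.support.tail.Nodup := by
        rw [hcsup]
        simp only [List.cons_append, List.tail_cons]
        simp only [List.nodup_append, List.nodup_cons, List.mem_append, List.nodup_reverse,
          List.mem_reverse, List.mem_singleton, List.nodup_singleton, List.not_mem_nil,
          not_false_eq_true, and_true, List.disjoint_singleton, List.disjoint_append_right,
          List.disjoint_reverse_right] at hnodupP ⊢
        obtain ⟨⟨hp1, htnd⟩, hWnd, hdisj⟩ := hnodupP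
        exact ⟨htnd, ⟨hWnd, ⟨trivial, List.nodup_nil⟩, fun a ha b hb h => hdisj p₁ List.mem_cons_self a ha (h.trans hb).symm⟩,
          fun x hx b hb => hb.elim (fun hbW => hdisj x (List.mem_cons_of_mem _ hx) b hbW) (fun hb1 h => hp1 ((h.trans hb1) ▸ hx))⟩
      have hcset : ∀ x, x ∈ c.support ↔ x ∈ P.support := by
        intro x
        rw [hcsup, hPsup]
        simp only [List.mem_append, List.mem_cons, List.mem_reverse, List.mem_singleton]
        tauto
      have hcardP : P.support.toFinset.card = P.length + 1 := by
        rw [List.toFinset_card_of_nodup hP.support_nodup, Walk.length_support]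
      by_contra hneq
      have hPn' : P.length + 1 ≤ n := by
        rw [← hcardP, ← hn]
        exact Finset.card_le_univ _
      have hex : ∃ w, w ∉ P.support := by
        by_contra hall
        push_neg at hall
        have huniv : P.support.toFinset = Finset.univ :=
          Finset.eq_univ_iff_forall.mpr (by simpa using hall)
        have hcu : P.support.toFinset.card = n := by rw [huniv, Finset.card_univ, hn]
        omega
      obtain ⟨w0, hw0⟩ := hex
      have hGconn : G.Connected := by
        have hcg := hconn.2 ∅ (by simpa using hk1)
        rw [Set.compl_empty] at hcg
        exact (induceUnivIso G).connected_iff.mp hcg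
      obtain ⟨wk⟩ := hGconn.preconnected w0 p₁
      obtain ⟨dart, hdmem, hdfst, hdsnd⟩ := wk.exists_boundary_dart {x | x ∈ P.support}ᶜ
        (by simpa using hw0) (by simp [P.start_mem_support])
      have hadjw : G.Adj dart.fst dart.snd := dart.adj
      have hvjc : dart.snd ∈ c.support := (hcset _).mpr (by simpa using hdsnd)
      set c' := c.rotate _ hvjc with hc'
      have hc'len : c'.length = c.length := by
        have hh := (c.rotate_darts _ hvjc).perm.length_eq
        rw [← Walk.length_darts, ← Walk.length_darts]; exact hh
      have hc'nn : ¬ c'.Nil := by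
        rw [Walk.not_nil_iff_lt_length]; omega
      have hc'tailnd : c'.support.tail.Nodup := by
        rw [List.IsRotated.nodup_iff (Walk.support_rotate c _ hvjc)]
        exact hctail
      have hadjc := c'.adj_snd hc'nn
      set q := c'.tail with hq
      have hcq : Walk.cons hadjc q = c' := c'.cons_tail_eq hc'nn
      have hqsup : q.support = c'.support.tail := by
        conv_rhs => rw [← hcq]
        simp
      have hqpath : q.IsPath := (Walk.isPath_def q).mpr (hqsup ▸ hc'tailnd)
      have hwnot : dart.fst ∉ q.reverse.support := by
        rw [Walk.support_reverse, List.mem_reverse]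
        intro hmem
        rw [hqsup] at hmem
        have h1 : dart.fst ∈ c.support.tail :=
          (List.IsRotated.mem_iff (Walk.support_rotate c _ hvjc)).mp hmem
        have h2 : dart.fst ∈ c.support := by
          rw [c.support_eq_cons]
          exact List.mem_cons_of_mem _ h1
        have h3 : dart.fst ∈ P.support := (hcset _).mp h2
        exact absurd h3 (by simpa using hdfst)
      have hfinal : (Walk.cons hadjw q.reverse).IsPath := by
        rw [Walk.cons_isPath_iff]
        exact ⟨hqpath.reverse, hwnot⟩
      have hle := hPmax _ _ _ hfinal
      have hql : q.length + 1 = c'.length := by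
        conv_rhs => rw [← hcq]
        rw [Walk.length_cons]
      rw [Walk.length_cons, Walk.length_reverse] at hle
      omega
    · left
      push_neg at hcross
      set A : Set ℕ := {i | i < P.length ∧ G.Adj p₁ (P.getVert (i+1))} with hA
      set B : Set ℕ := {i | i < P.length ∧ G.Adj p₂ (P.getVert i)} with hB
      have hfin : (↑(Finset.range P.length) : Set ℕ).Finite := (Finset.range P.length).finite_toSet
      have hAsub : A ⊆ ↑(Finset.range P.length) := fun i hi => by
        simpa using hi.1
      have hBsub : B ⊆ ↑(Finset.range P.length) := fun i hi => by
        simpa using hi.1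
      have hAfin := hfin.subset hAsub
      have hBfin := hfin.subset hBsub
      have hkA : k ≤ A.ncard := by
        refine le_trans (kconn_mindeg hconn p₁) ?_
        have himg : G.neighborSet p₁ ⊆ (fun i => P.getVert (i+1)) '' A := by
          intro w hw
          obtain ⟨nn, hgv, hle⟩ := Walk.mem_support_iff_exists_getVert.mp (hnbr1 w hw)
          have hn0 : nn ≠ 0 := by
            rintro rfl
            rw [Walk.getVert_zero] at hgv
            exact G.irrefl (hgv ▸ hw)
          have hnn1 : nn - 1 + 1 = nn := by omega
          refine ⟨nn - 1, ⟨by omega, ?_⟩, ?_⟩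
          · rw [hnn1, hgv]; exact hw
          · simpa [hnn1] using hgv
        calc (G.neighborSet p₁).ncard ≤ ((fun i => P.getVert (i+1)) '' A).ncard :=
              Set.ncard_le_ncard himg (hAfin.image _)
          _ ≤ A.ncard := Set.ncard_image_le hAfin
      have hkB : k ≤ B.ncard := by
        refine le_trans (kconn_mindeg hconn p₂) ?_
        have himg : G.neighborSet p₂ ⊆ (fun i => P.getVert i) '' B := by
          intro w hw
          obtain ⟨nn, hgv, hle⟩ := Walk.mem_support_iff_exists_getVert.mp (hnbr2 w hw)
          have hnm : nn ≠ P.length := by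
            rintro rfl
            rw [Walk.getVert_length] at hgv
            exact G.irrefl (hgv ▸ hw)
          exact ⟨nn, ⟨by omega, by rw [hgv]; exact hw⟩, hgv⟩
        calc (G.neighborSet p₂).ncard ≤ ((fun i => P.getVert i) '' B).ncard :=
              Set.ncard_le_ncard himg (hBfin.image _)
          _ ≤ B.ncard := Set.ncard_image_le hBfin
      have hdisj : Disjoint A B := by
        rw [Set.disjoint_iff_inter_eq_empty]
        ext i
        simp only [Set.mem_inter_iff, Set.mem_empty_iff_false, iff_false, hA, hB,
          Set.mem_setOf_eq]
        rintro ⟨⟨hi1, hi2⟩, ⟨_, hi4⟩⟩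
        exact hcross i hi1 hi4 hi2
      have hUB : (A ∪ B).ncard ≤ P.length := by
        refine le_trans (Set.ncard_le_ncard (Set.union_subset hAsub hBsub) hfin) ?_
        rw [Set.ncard_coe_finset, Finset.card_range]
      have hU : (A ∪ B).ncard = A.ncard + B.ncard := Set.ncard_union_eq hdisj hAfin hBfin
      omega
  -- sizes of supports
  have hsP : ({x | x ∈ P.support}).ncard = P.length + 1 := by
    have he : {x | x ∈ P.support} = ↑P.support.toFinset := by ext x; simp
    rw [he, Set.ncard_coe_finset, List.toFinset_card_of_nodup hP.support_nodup,
      Walk.length_support]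
  have hQl : Q.length = P.length := le_antisymm (hPmax _ _ _ hQ) (hQmax _ _ _ hP)
  have hsQ : ({x | x ∈ Q.support}).ncard = P.length + 1 := by
    have he : {x | x ∈ Q.support} = ↑Q.support.toFinset := by ext x; simp
    rw [he, Set.ncard_coe_finset, List.toFinset_card_of_nodup hQ.support_nodup,
      Walk.length_support, hQl]
  have hunion : ({x | x ∈ P.support} ∪ {x | x ∈ Q.support}).ncard ≤ n := by
    refine le_trans (Set.ncard_le_ncard (Set.subset_univ _) Set.finite_univ) ?_
    rw [Set.ncard_univ, Nat.card_eq_fintype_card, hn]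
  have hsum := Set.ncard_union_add_ncard_inter {x | x ∈ P.support} {x | x ∈ Q.support}
    (Set.toFinite _) (Set.toFinite _)
  have hPn : P.length + 1 ≤ n := by
    rw [← hsP]
    refine le_trans (Set.ncard_le_ncard (Set.subset_univ _) Set.finite_univ) ?_
    rw [Set.ncard_univ, Nat.card_eq_fintype_card, hn]
  rw [hsP, hsQ] at hsum
  have hkn : k < n := hn ▸ hconn.1
  rcases key with h | h <;> omega

end Main
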